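/- With R and R_{−j} as above and R_j denoting the (j+1)-th column of R, one has R_jᵀ(I − Π_{R_{−j}})R_j = (c_j − c_{j−1})(c_{j+1} − c_j)/(c_{j+1} − c_{j−1}). -/

import Mathlib

open Matrix

/-- Orthogonal projection matrix onto the column space of `A`. -/
noncomputable def projMat {n m : ℕ} (A : Matrix (Fin n) (Fin m) ℝ) :
    Matrix (Fin n) (Fin n) ℝ :=
  A * (Aᵀ * A)⁻¹ * Aᵀ

lemma sum_ind_card (n a b : ℕ) (hb : b ≤ n) :
    ∑ t : Fin n, (if a < (t:ℕ)+1 ∧ (t:ℕ)+1 ≤ b then (1:ℝ) else 0) = ((b - a : ℕ) : ℝ) := by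
  rw [Fin.sum_univ_eq_sum_range (fun t => if a < t+1 ∧ t+1 ≤ b then (1:ℝ) else 0)]
  rw [Finset.sum_boole]
  have : (Finset.range n).filter (fun t => a < t+1 ∧ t+1 ≤ b) = Finset.Ico a b := by
    ext t; simp [Finset.mem_Ico]; omega
  rw [this, Nat.card_Ico]

/-- With `R` the segment-indicator matrix, `R_{-j}` the matrix with columns `j`
and `j+1` merged, and `Rⱼ` the `(j+1)`-th column of `R`,
`Rⱼᵀ(I - Π_{R_{-j}})Rⱼ = (c_j - c_{j-1})(c_{j+1} - c_j)/(c_{j+1} - c_{j-1})`. -/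
theorem stmt_3 (n m : ℕ) (c : ℕ → ℕ) (hc0 : c 0 = 0) (hclast : c (m + 1) = n)
    (hcmono : ∀ k ≤ m, c k < c (k + 1))
    (j : ℕ) (hj1 : 1 ≤ j) (hjm : j ≤ m)
    (ind : ℕ → ℕ → Fin n → ℝ)
    (hind : ∀ a b (t : Fin n), ind a b t =
      if a < (t : ℕ) + 1 ∧ (t : ℕ) + 1 ≤ b then 1 else 0)
    (R : Matrix (Fin n) (Fin (m + 1)) ℝ)
    (hR : ∀ (t : Fin n) (k : Fin (m + 1)), R t k = ind (c k) (c (k + 1)) t)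
    (Rm : Matrix (Fin n) (Fin m) ℝ)
    (hRm : ∀ (t : Fin n) (k : Fin m), Rm t k =
      if (k : ℕ) + 1 < j then ind (c k) (c ((k : ℕ) + 1)) t
      else if (k : ℕ) + 1 = j then ind (c (j - 1)) (c (j + 1)) t
      else ind (c ((k : ℕ) + 1)) (c ((k : ℕ) + 2)) t)
    (Rj : Fin n → ℝ) (hRj : Rj = ind (c j) (c (j + 1))) :
    Rj ⬝ᵥ ((1 - projMat Rm) *ᵥ Rj) =
      ((c j : ℝ) - c (j - 1)) * ((c (j + 1) : ℝ) - c j) /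
        ((c (j + 1) : ℝ) - c (j - 1)) := by
  -- monotonicity of c
  have cmono : ∀ a b, a ≤ b → b ≤ m + 1 → c a ≤ c b := by
    intro a b hab hbm
    obtain ⟨d, rfl⟩ := Nat.exists_eq_add_of_le hab
    clear hab
    induction d with
    | zero => simp
    | succ d ih =>
      have h1 : a + d ≤ m := by omega
      have h2 := hcmono (a + d) h1
      have h3 := ih (by omega)
      have h4 : a + (d + 1) = (a + d) + 1 := by omega
      rw [h4]
      omega
  have cstrict : ∀ a b, a < b → b ≤ m + 1 → c a < c b := by
    intro a b hab hbm
    have h1 := hcmono a (by omega)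
    have h2 := cmono (a + 1) b (by omega) hbm
    omega
  -- segment endpoints of the columns of Rm
  set lo : Fin m → ℕ := fun k => c (if (k : ℕ) + 1 ≤ j then (k : ℕ) else (k : ℕ) + 1) with hlo
  set hi : Fin m → ℕ := fun k => c (if (k : ℕ) + 1 < j then (k : ℕ) + 1 else (k : ℕ) + 2) with hhi
  have hRm' : ∀ (t : Fin n) (k : Fin m), Rm t k = ind (lo k) (hi k) t := by
    intro t k
    rw [hRm]
    rcases lt_trichotomy ((k : ℕ) + 1) j with h | h | h
    · simp [hlo, hhi, h, h.le, (by omega : (k:ℕ) < j)]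
    · have hk : j - 1 = (k : ℕ) := by omega
      have hk2 : j + 1 = (k : ℕ) + 2 := by omega
      simp [hlo, hhi, h, hk, hk2, lt_irrefl, (by omega : (k:ℕ) < j)]
    · have h1 : ¬ ((k : ℕ) + 1 < j) := by omega
      have h2 : ¬ ((k : ℕ) + 1 = j) := by omega
      have h3 : ¬ ((k : ℕ) + 1 ≤ j) := by omega
      simp [hlo, hhi, h1, h2, h3]
      rw [if_neg (show ¬ (k:ℕ) < j by omega)]
  have hi_le_n : ∀ k : Fin m, hi k ≤ n := by
    intro k
    rw [← hclast]
    apply cmono _ _ _ (le_refl _)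
    split_ifs <;> omega
  have lo_lt_hi : ∀ k : Fin m, lo k < hi k := by
    intro k
    apply cstrict
    · split_ifs <;> omega
    · split_ifs <;> omega
  -- key summation lemmas
  have key_sub : ∀ a b a' b', a' ≤ a → b ≤ b' → b ≤ n →
      ∑ t : Fin n, ind a b t * ind a' b' t = ((b - a : ℕ) : ℝ) := by
    intro a b a' b' ha hb hbn
    rw [← sum_ind_card n a b hbn]
    apply Finset.sum_congr rfl
    intro t _
    rw [hind, hind]
    by_cases h1 : a < (t:ℕ) + 1 ∧ (t:ℕ) + 1 ≤ b
    · obtain ⟨x1, x2⟩ := h1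
      have h2 : a' < (t:ℕ) + 1 ∧ (t:ℕ) + 1 ≤ b' := ⟨by omega, by omega⟩
      rw [if_pos ⟨x1, x2⟩, if_pos h2, mul_one]
    · rw [if_neg h1, zero_mul]
  have key_disj : ∀ a b a' b', b ≤ a' →
      ∑ t : Fin n, ind a b t * ind a' b' t = 0 := by
    intro a b a' b' h
    apply Finset.sum_eq_zero
    intro t _
    rw [hind, hind]
    by_cases h1 : a < (t:ℕ) + 1 ∧ (t:ℕ) + 1 ≤ b
    · obtain ⟨x1, x2⟩ := h1
      have h2 : ¬(a' < (t:ℕ) + 1 ∧ (t:ℕ) + 1 ≤ b') := by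
        rintro ⟨y1, y2⟩; omega
      rw [if_pos ⟨x1, x2⟩, if_neg h2, mul_zero]
    · rw [if_neg h1, zero_mul]
  -- the Gram matrix of Rm is diagonal
  set d : Fin m → ℝ := fun k => ((hi k - lo k : ℕ) : ℝ) with hd
  have dne : ∀ k : Fin m, d k ≠ 0 := by
    intro k
    have h := lo_lt_hi k
    simp only [hd]
    have : 0 < hi k - lo k := by omega
    positivity
  have hdinv : (Matrix.diagonal d)⁻¹ = Matrix.diagonal (fun k => (d k)⁻¹) := by
    apply Matrix.inv_eq_right_inv
    rw [Matrix.diagonal_mul_diagonal]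
    ext k l
    by_cases hkl : k = l
    · subst hkl
      simp [mul_inv_cancel₀ (dne k)]
    · simp [Matrix.diagonal_apply_ne _ hkl, Matrix.one_apply_ne hkl]
  have ordered : ∀ k l : Fin m, (k : ℕ) < (l : ℕ) → hi k ≤ lo l := by
    intro k l hkl
    apply cmono _ _ _ (by split_ifs <;> omega)
    split_ifs <;> omega
  have hGram : Rmᵀ * Rm = Matrix.diagonal d := by
    ext k l
    rw [Matrix.mul_apply]
    simp only [Matrix.transpose_apply]
    rcases lt_trichotomy (k : ℕ) (l : ℕ) with h | h | h
    · rw [Matrix.diagonal_apply_ne _ (by intro hh; rw [hh] at h; omega)]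
      calc ∑ t : Fin n, Rm t k * Rm t l
          = ∑ t : Fin n, ind (lo k) (hi k) t * ind (lo l) (hi l) t := by
            apply Finset.sum_congr rfl; intro t _; rw [hRm', hRm']
        _ = 0 := key_disj _ _ _ _ (ordered k l h)
    · have hkl : k = l := Fin.ext h
      subst hkl
      rw [Matrix.diagonal_apply_eq]
      calc ∑ t : Fin n, Rm t k * Rm t k
          = ∑ t : Fin n, ind (lo k) (hi k) t * ind (lo k) (hi k) t := by
            apply Finset.sum_congr rfl; intro t _; rw [hRm']
        _ = d k := key_sub _ _ _ _ (le_refl _) (le_refl _) (hi_le_n k)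
    · rw [Matrix.diagonal_apply_ne _ (by intro hh; rw [hh] at h; omega)]
      calc ∑ t : Fin n, Rm t k * Rm t l
          = ∑ t : Fin n, ind (lo l) (hi l) t * ind (lo k) (hi k) t := by
            apply Finset.sum_congr rfl; intro t _; rw [hRm', hRm', mul_comm]
        _ = 0 := key_disj _ _ _ _ (ordered l k h)
  -- the special index
  have hjm' : j - 1 < m := by omega
  set j0 : Fin m := ⟨j - 1, hjm'⟩ with hj0
  have hlo_j0 : lo j0 = c (j - 1) := by simp only [hlo, hj0]; rw [if_pos (by omega)]
  have hhi_j0 : hi j0 = c (j + 1) := by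
    simp only [hhi, hj0]; rw [if_neg (by omega)]; congr 1; omega
  set L : ℝ := ((c (j + 1) - c j : ℕ) : ℝ) with hL
  -- Rmᵀ *ᵥ Rj
  have hv : Rmᵀ *ᵥ Rj = fun k => if k = j0 then L else 0 := by
    funext k
    show ∑ t : Fin n, Rmᵀ k t * Rj t = _
    have heq : ∑ t : Fin n, Rmᵀ k t * Rj t
        = ∑ t : Fin n, ind (lo k) (hi k) t * ind (c j) (c (j + 1)) t := by
      apply Finset.sum_congr rfl; intro t _
      rw [Matrix.transpose_apply, hRm', hRj]
    rw [heq]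
    rcases lt_trichotomy ((k : ℕ) + 1) j with h | h | h
    · rw [if_neg (by intro hh; rw [hh] at h; simp [hj0] at h; omega)]
      exact key_disj (lo k) (hi k) (c j) (c (j + 1))
        (by rw [hhi]; simp only; rw [if_pos h]; exact cmono _ _ (by omega) (by omega))
    · have hk : k = j0 := by apply Fin.ext; simp [hj0]; omega
      rw [if_pos hk, hk, hlo_j0, hhi_j0]
      calc ∑ t : Fin n, ind (c (j-1)) (c (j+1)) t * ind (c j) (c (j+1)) t
          = ∑ t : Fin n, ind (c j) (c (j+1)) t * ind (c (j-1)) (c (j+1)) t := by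
            apply Finset.sum_congr rfl; intro t _; rw [mul_comm]
        _ = L := key_sub _ _ _ _ (cmono _ _ (by omega) (by omega)) (le_refl _)
            (by rw [← hclast]; exact cmono _ _ (by omega) (le_refl _))
    · rw [if_neg (by intro hh; rw [hh] at h; simp [hj0] at h; omega)]
      calc ∑ t : Fin n, ind (lo k) (hi k) t * ind (c j) (c (j+1)) t
          = ∑ t : Fin n, ind (c j) (c (j+1)) t * ind (lo k) (hi k) t := by
            apply Finset.sum_congr rfl; intro t _; rw [mul_comm]
        _ = 0 := key_disj _ _ _ _
            (by rw [hlo]; simp only; rw [if_neg (by omega)]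
                exact cmono _ _ (by omega) (by omega))
  -- positivity
  have hKL : c (j - 1) < c j := by
    have := cstrict (j - 1) j (by omega) (by omega); omega
  have hL2 : c j < c (j + 1) := cstrict _ _ (by omega) (by omega)
  have hcjn : c (j + 1) ≤ n := by rw [← hclast]; exact cmono _ _ (by omega) (le_refl _)
  -- main computation
  rw [Matrix.sub_mulVec, Matrix.one_mulVec, dotProduct_sub]
  have h1 : Rj ⬝ᵥ Rj = L := by
    show ∑ t : Fin n, Rj t * Rj t = L
    calc ∑ t : Fin n, Rj t * Rj t
        = ∑ t : Fin n, ind (c j) (c (j+1)) t * ind (c j) (c (j+1)) t := by rw [hRj]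
      _ = L := key_sub _ _ _ _ (le_refl _) (le_refl _) hcjn
  have h2 : Rj ⬝ᵥ (projMat Rm *ᵥ Rj) = L * L / ((c (j+1) : ℝ) - c (j-1)) := by
    rw [projMat, hGram, hdinv]
    rw [← Matrix.mulVec_mulVec, ← Matrix.mulVec_mulVec]
    rw [Matrix.dotProduct_mulVec, ← Matrix.mulVec_transpose, hv]
    have hdiag : Matrix.diagonal (fun k => (d k)⁻¹) *ᵥ (fun k => if k = j0 then L else 0)
        = fun k => if k = j0 then (d j0)⁻¹ * L else 0 := by
      funext k
      rw [Matrix.mulVec_diagonal]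
      by_cases hk : k = j0
      · simp [hk]
      · simp [hk]
    rw [hdiag]
    have hdp : (fun k => if k = j0 then L else 0) ⬝ᵥ
        (fun k => if k = j0 then (d j0)⁻¹ * L else 0) = L * ((d j0)⁻¹ * L) := by
      unfold dotProduct
      rw [Finset.sum_eq_single j0]
      · simp
      · intro b _ hb; simp [hb]
      · intro hb; simp at hb
    rw [hdp]
    have hdj0 : d j0 = (c (j+1) : ℝ) - c (j-1) := by
      rw [hd]; simp only [hlo_j0, hhi_j0]
      rw [Nat.cast_sub (by omega)]
    rw [hdj0]
    field_simp
  rw [h1, h2]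
  have e1 : L = (c (j+1) : ℝ) - c j := by rw [hL, Nat.cast_sub (by omega)]
  have e2 : (c (j-1) : ℝ) < c j := by exact_mod_cast hKL
  have e3 : (c j : ℝ) < c (j+1) := by exact_mod_cast hL2
  rw [e1]
  have hne : (c (j+1) : ℝ) - c (j-1) ≠ 0 := by nlinarith
  field_simp
  ring
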